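/- With the CGMY data below, there exist w₀ > 0 and η > 0 such that for all w > w₀, |Re(θ₀(w) - ψ₀(w))| ≤ max(η·w^{Y-1}, |κ|). -/

import Mathlib

open Complex

lemma re_cpow_I_mul (Y w : ℝ) (hw : 0 < w) :
    ((Complex.I * w) ^ (Y:ℂ)).re = w ^ Y * Real.cos (Y * Real.pi / 2) := by
  have hne : Complex.I * w ≠ 0 := by
    simp [Complex.ext_iff, hw.ne']
  have harg : (Complex.I * w).arg = Real.pi / 2 := by
    rw [mul_comm, Complex.arg_real_mul _ hw, Complex.arg_I]
  have habs : ‖Complex.I * w‖ = w := by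
    simp [abs_of_pos hw]
  rw [Complex.cpow_def_of_ne_zero hne, Complex.exp_re]
  simp only [Complex.mul_re, Complex.mul_im, Complex.log_re, Complex.log_im,
    Complex.ofReal_re, Complex.ofReal_im, harg, habs]
  rw [Real.rpow_def_of_pos hw]
  ring_nf

lemma re_cpow_neg_I_mul (Y w : ℝ) (hw : 0 < w) :
    ((-(Complex.I * w)) ^ (Y:ℂ)).re = w ^ Y * Real.cos (Y * Real.pi / 2) := by
  have hne : -(Complex.I * w) ≠ 0 := by
    simp [Complex.ext_iff, hw.ne']
  have harg : (-(Complex.I * w)).arg = -(Real.pi / 2) := by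
    have : -(Complex.I * (w:ℂ)) = (w:ℂ) * (-Complex.I) := by ring
    rw [this, Complex.arg_real_mul _ hw, Complex.arg_neg_I]
  have habs : ‖-(Complex.I * w)‖ = w := by
    simp [abs_of_pos hw]
  rw [Complex.cpow_def_of_ne_zero hne, Complex.exp_re]
  simp only [Complex.mul_re, Complex.mul_im, Complex.log_re, Complex.log_im,
    Complex.ofReal_re, Complex.ofReal_im, harg, habs]
  rw [Real.rpow_def_of_pos hw]
  rw [show Real.log w * 0 + -(Real.pi/2) * Y = -(Y * Real.pi / 2) by ring,
    Real.cos_neg]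
  ring_nf

lemma cpow_seg_bound (Y : ℝ) (hY1 : 1 < Y) (a s : ℝ)
    (hs1 : 1 ≤ |s|) (has : |a| ≤ |s|) :
    ‖((a : ℂ) + Complex.I * s) ^ (Y:ℂ) - (Complex.I * s) ^ (Y:ℂ)‖
      ≤ |a| * Y * (2*|s|) ^ (Y-1) := by
  have hs0 : s ≠ 0 := by intro h; simp [h] at hs1; linarith
  have hY0 : (0:ℝ) < Y := by linarith
  set g : ℝ → ℂ := fun t => ((a:ℂ) * t + Complex.I * s) ^ (Y:ℂ) with hg
  set g' : ℝ → ℂ := fun t => (Y:ℂ) * ((a:ℂ) * t + Complex.I * s) ^ ((Y:ℂ) - 1) * a with hg'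
  have him : ∀ t : ℝ, ((a:ℂ) * t + Complex.I * s).im = s := by
    intro t; simp
  have hderiv : ∀ t ∈ Set.Icc (0:ℝ) 1, HasDerivWithinAt g (g' t) (Set.Icc 0 1) t := by
    intro t _
    have h1 : HasDerivAt (fun z : ℂ => (a:ℂ) * z + Complex.I * s) (a:ℂ) (t:ℝ) := by
      simpa using ((hasDerivAt_id ((t:ℝ):ℂ)).const_mul (a:ℂ)).add_const (Complex.I * s)
    have h2 : HasDerivAt (fun z : ℂ => ((a:ℂ) * z + Complex.I * s) ^ (Y:ℂ)) (g' t) (t:ℝ) := by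
      have := h1.cpow_const (c := (Y:ℂ)) (Complex.mem_slitPlane_iff.2 (Or.inr (by rw [him t]; exact hs0)))
      simpa [hg'] using this
    exact (h2.comp_ofReal).hasDerivWithinAt
  have hbound : ∀ t ∈ Set.Ico (0:ℝ) 1, ‖g' t‖ ≤ |a| * Y * (2*|s|) ^ (Y-1) := by
    intro t ht
    have habsle : ‖(a:ℂ) * t + Complex.I * s‖ ≤ 2 * |s| := by
      refine le_trans (Complex.norm_le_abs_re_add_abs_im _) ?_
      have hre : ((a:ℂ) * t + Complex.I * s).re = a * t := by simp
      rw [hre, him t]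
      have : |a * t| ≤ |a| := by
        rw [abs_mul]
        calc |a| * |t| ≤ |a| * 1 := by
              apply mul_le_mul_of_nonneg_left _ (abs_nonneg a)
              rw [_root_.abs_of_nonneg ht.1]; linarith [ht.2]
          _ = |a| := mul_one _
      linarith
    have hcp : ‖((a:ℂ) * t + Complex.I * s) ^ ((Y:ℂ) - 1)‖ ≤ (2*|s|) ^ (Y-1) := by
      have h := Complex.norm_cpow_le ((a:ℂ) * t + Complex.I * s) ((Y:ℂ) - 1)
      have hre : ((Y:ℂ) - 1).re = Y - 1 := by simp
      have him' : ((Y:ℂ) - 1).im = 0 := by simp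
      rw [hre, him'] at h
      simp only [mul_zero, Real.exp_zero, div_one] at h
      refine h.trans ?_
      exact Real.rpow_le_rpow (norm_nonneg _) habsle (by linarith)
    have : ‖g' t‖ = Y * ‖((a:ℂ) * t + Complex.I * s) ^ ((Y:ℂ) - 1)‖ * |a| := by
      simp [hg', abs_of_pos hY0]
    rw [this]
    calc Y * ‖((a:ℂ) * t + Complex.I * s) ^ ((Y:ℂ) - 1)‖ * |a|
        ≤ Y * ((2*|s|) ^ (Y-1)) * |a| := by
          apply mul_le_mul_of_nonneg_right _ (abs_nonneg a)
          exact mul_le_mul_of_nonneg_left hcp hY0.le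
      _ = |a| * Y * (2*|s|) ^ (Y-1) := by ring
  have := norm_image_sub_le_of_norm_deriv_le_segment' hderiv hbound 1 (by norm_num)
  simpa [hg] using this


open MeasureTheory Filter Topology Complex

/-- The stable scale coefficient `σ_Y = 2·C·Γ(-Y)·|cos(πY/2)|`. -/
noncomputable def sigmaY (C Y : ℝ) : ℝ :=
  2 * C * Real.Gamma (-Y) * |Real.cos (Real.pi * Y / 2)|

/-- The martingale drift `b̃`. -/
noncomputable def btilde (C G M Y : ℝ) : ℝ :=
  -(C * Real.Gamma (-Y) * ((M - 1) ^ Y + (G + 1) ^ Y - M ^ Y - G ^ Y))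

/-- The constant `κ = b̃/2 - C·Γ(-Y)·(M^Y + G^Y)`. -/
noncomputable def kappaC (C G M Y : ℝ) : ℝ :=
  btilde C G M Y / 2 - C * Real.Gamma (-Y) * (M ^ Y + G ^ Y)

/-- The limiting stable exponent `θ₀(u) = -σ_Y·|u|^Y`. -/
noncomputable def theta0 (C Y : ℝ) (u : ℝ) : ℝ :=
  -(sigmaY C Y) * |u| ^ Y

/-- The contour-shifted characteristic exponent `ψ₀`. -/
noncomputable def psi0 (C G M Y : ℝ) (v : ℝ) : ℂ :=
  Complex.I * (v : ℂ) * ((btilde C G M Y : ℝ) : ℂ) + ((kappaC C G M Y : ℝ) : ℂ)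
    + ((C * Real.Gamma (-Y) : ℝ) : ℂ) *
      ((((M - 1/2 : ℝ) : ℂ) - Complex.I * (v : ℂ)) ^ (Y : ℂ)
        + (((G + 1/2 : ℝ) : ℂ) + Complex.I * (v : ℂ)) ^ (Y : ℂ))

/-- The rescaled exponent `θ(t,v)` in the Lipton–Lewis representation. -/
noncomputable def thetaT (C G M Y : ℝ) (t v : ℝ) : ℂ :=
  Complex.I * (v : ℂ) * ((btilde C G M Y : ℝ) : ℂ) * ((t ^ (1 - 1/Y) : ℝ) : ℂ)
    + ((kappaC C G M Y : ℝ) : ℂ) * (t : ℂ)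
    + ((C * Real.Gamma (-Y) : ℝ) : ℂ) *
      (((((M - 1/2) * t ^ (1/Y) : ℝ) : ℂ) - Complex.I * (v : ℂ)) ^ (Y : ℂ)
        + ((((G + 1/2) * t ^ (1/Y) : ℝ) : ℂ) + Complex.I * (v : ℂ)) ^ (Y : ℂ))

/-- The normalized Lipton–Lewis ATM factor `L(t)`. -/
noncomputable def LLfn (C G M Y : ℝ) (t : ℝ) : ℝ :=
  (1 / Real.pi) *
    (∫ v in Set.Ioi (0 : ℝ),
      (1 - Complex.exp (thetaT C G M Y t v)) / (((v ^ 2 + t ^ (2/Y) / 4 : ℝ)) : ℂ)).re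

/-- The first-order coefficient `d₁`. -/
noncomputable def dOne (C Y : ℝ) : ℝ :=
  (1 / Real.pi) * Real.Gamma (1 - 1/Y) * (sigmaY C Y) ^ (1/Y)

/-- The second-order coefficient `d₂`. -/
noncomputable def dTwo (C G M Y : ℝ) : ℝ :=
  (1 / Real.pi) * ∫ w in Set.Ioi (0 : ℝ),
    ((w ^ 2 + 1/4) * theta0 C Y w - w ^ 2 * (psi0 C G M Y w).re) / (w ^ 2 * (w ^ 2 + 1/4))

/-- There exist `w₀ > 0` and `η > 0` such that for all `w > w₀`,
`|Re(θ₀(w) - ψ₀(w))| ≤ max(η·w^{Y-1}, |κ|)`. -/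
theorem stmt6 (C G M Y : ℝ) (hC : 0 < C) (hG : 0 ≤ G) (hM : 1 < M)
    (hY1 : 1 < Y) (hY2 : Y < 2) :
    ∃ w₀ > (0 : ℝ), ∃ η > (0 : ℝ), ∀ w : ℝ, w₀ < w →
      |theta0 C Y w - (psi0 C G M Y w).re| ≤ max (η * w ^ (Y - 1)) |kappaC C G M Y| := by
  set A : ℝ := C * Real.Gamma (-Y) with hA
  set Mt : ℝ := M - 1/2 with hMt
  set Gt : ℝ := G + 1/2 with hGt
  set K : ℝ := |kappaC C G M Y| with hK
  set B : ℝ := |A| * (|Mt| + |Gt|) * Y * (2:ℝ) ^ (Y-1) with hB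
  have hBnn : 0 ≤ B := by positivity
  refine ⟨1 + |Mt| + |Gt|, by positivity, B + K + 1, by positivity, ?_⟩
  intro w hw
  have hw1 : 1 ≤ w := by
    have := abs_nonneg Mt; have := abs_nonneg Gt; linarith
  have hw0 : 0 < w := by linarith
  have hwM : |Mt| ≤ w := by have := abs_nonneg Gt; linarith
  have hwG : |Gt| ≤ w := by have := abs_nonneg Mt; linarith
  have hawn : |(-w)| = w := by rw [abs_neg, _root_.abs_of_pos hw0]
  have haw : |w| = w := _root_.abs_of_pos hw0
  -- the two difference bounds
  have hb1 : ‖((Mt:ℂ) - Complex.I * w) ^ (Y:ℂ) - (-(Complex.I * w)) ^ (Y:ℂ)‖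
      ≤ |Mt| * Y * (2*w) ^ (Y-1) := by
    have := cpow_seg_bound Y hY1 Mt (-w) (by rw [hawn]; exact hw1) (by rw [hawn]; exact hwM)
    rw [hawn] at this
    have e1 : ((Mt:ℂ) + Complex.I * ((-w : ℝ):ℂ)) = (Mt:ℂ) - Complex.I * w := by
      push_cast; ring
    have e2 : (Complex.I * ((-w : ℝ):ℂ)) = -(Complex.I * w) := by push_cast; ring
    rwa [e1, e2] at this
  have hb2 : ‖((Gt:ℂ) + Complex.I * w) ^ (Y:ℂ) - (Complex.I * w) ^ (Y:ℂ)‖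
      ≤ |Gt| * Y * (2*w) ^ (Y-1) := by
    have := cpow_seg_bound Y hY1 Gt w (by rw [haw]; exact hw1) (by rw [haw]; exact hwG)
    rwa [haw] at this
  -- real parts
  have hu1 : ((-(Complex.I * w)) ^ (Y:ℂ)).re = w ^ Y * Real.cos (Y * Real.pi / 2) :=
    re_cpow_neg_I_mul Y w hw0
  have hu2 : ((Complex.I * (w:ℂ)) ^ (Y:ℂ)).re = w ^ Y * Real.cos (Y * Real.pi / 2) :=
    re_cpow_I_mul Y w hw0
  have hcos : Real.cos (Real.pi * Y / 2) < 0 := by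
    apply Real.cos_neg_of_pi_div_two_lt_of_lt <;> nlinarith [Real.pi_pos]
  have hcoseq : Real.pi * Y / 2 = Y * Real.pi / 2 := by ring
  -- theta0 identity
  have hth : theta0 C Y w = A * ((-(Complex.I * w)) ^ (Y:ℂ)).re
      + A * ((Complex.I * (w:ℂ)) ^ (Y:ℂ)).re := by
    rw [hu1, hu2, theta0, sigmaY, haw, ← hcoseq,
      _root_.abs_of_neg hcos]
    ring
  -- psi0 real part
  have hps : (psi0 C G M Y w).re = kappaC C G M Y
      + A * (((Mt:ℂ) - Complex.I * w) ^ (Y:ℂ)).re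
      + A * (((Gt:ℂ) + Complex.I * w) ^ (Y:ℂ)).re := by
    simp only [psi0, ← hMt, ← hGt, ← hA, Complex.add_re, Complex.mul_re, Complex.mul_im,
      Complex.I_re, Complex.I_im, Complex.ofReal_re, Complex.ofReal_im]
    ring
  have hdiff : theta0 C Y w - (psi0 C G M Y w).re
      = -(kappaC C G M Y)
        + A * (((-(Complex.I * w)) ^ (Y:ℂ)).re - (((Mt:ℂ) - Complex.I * w) ^ (Y:ℂ)).re)
        + A * (((Complex.I * (w:ℂ)) ^ (Y:ℂ)).re - (((Gt:ℂ) + Complex.I * w) ^ (Y:ℂ)).re) := by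
    rw [hth, hps]; ring
  have hre1 : |(((-(Complex.I * w)) ^ (Y:ℂ)).re - (((Mt:ℂ) - Complex.I * w) ^ (Y:ℂ)).re)|
      ≤ |Mt| * Y * (2*w) ^ (Y-1) := by
    have : (((-(Complex.I * w)) ^ (Y:ℂ)).re - (((Mt:ℂ) - Complex.I * w) ^ (Y:ℂ)).re)
        = ((((Mt:ℂ) - Complex.I * w) ^ (Y:ℂ) - (-(Complex.I * w)) ^ (Y:ℂ)).re) * (-1) := by
      simp [Complex.sub_re]
    rw [this, abs_mul, abs_neg, abs_one, mul_one]
    exact le_trans (Complex.abs_re_le_norm _) hb1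
  have hre2 : |(((Complex.I * (w:ℂ)) ^ (Y:ℂ)).re - (((Gt:ℂ) + Complex.I * w) ^ (Y:ℂ)).re)|
      ≤ |Gt| * Y * (2*w) ^ (Y-1) := by
    have : (((Complex.I * (w:ℂ)) ^ (Y:ℂ)).re - (((Gt:ℂ) + Complex.I * w) ^ (Y:ℂ)).re)
        = ((((Gt:ℂ) + Complex.I * w) ^ (Y:ℂ) - (Complex.I * (w:ℂ)) ^ (Y:ℂ)).re) * (-1) := by
      simp [Complex.sub_re]
    rw [this, abs_mul, abs_neg, abs_one, mul_one]
    exact le_trans (Complex.abs_re_le_norm _) hb2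
  have h2w : (2*w) ^ (Y-1) = (2:ℝ) ^ (Y-1) * w ^ (Y-1) :=
    Real.mul_rpow (by norm_num) hw0.le
  have hwp1 : 1 ≤ w ^ (Y-1) := Real.one_le_rpow hw1 (by linarith)
  have hfinal : |theta0 C Y w - (psi0 C G M Y w).re| ≤ (B + K + 1) * w ^ (Y-1) := by
    rw [hdiff]
    calc |_ + A * _ + A * _|
        ≤ K + |A| * (|Mt| * Y * (2*w) ^ (Y-1)) + |A| * (|Gt| * Y * (2*w) ^ (Y-1)) := by
          refine le_trans (abs_add_le _ _) (add_le_add (le_trans (abs_add_le _ _)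
            (add_le_add ?_ ?_)) ?_)
          · rw [abs_neg]
          · rw [abs_mul]
            exact mul_le_mul_of_nonneg_left hre1 (abs_nonneg A)
          · rw [abs_mul]
            exact mul_le_mul_of_nonneg_left hre2 (abs_nonneg A)
      _ = K + B * w ^ (Y-1) := by rw [h2w, hB]; ring
      _ ≤ (B + K + 1) * w ^ (Y-1) := by nlinarith [abs_nonneg (kappaC C G M Y)]
  exact le_trans hfinal (le_max_left _ _)
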